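/- Let F^1, ..., F^N be IFSs with probabilities on a compact metric space (X, d), all with common Lipschitz constant 0 ≤ l < 1. Let H = {F(σ) : σ ∈ Ω} ⊆ H(X) be the set of random fractal sets of the superIFS, where F : Ω → H(X) is the code-tree coding map, and for each positive integer V let H_{V,1} be the superfractal (the set of first components of the set attractor H_V of the IFS {H(X)^V; f^a, a ∈ A}). Then lim_{V→∞} H_{V,1} = H in the Hausdorff metric on H(H(X)) induced by d_H; that is, for every ε > 0 there is V_0 such that for all V ≥ V_0 the Hausdorff distance between H_{V,1} and H in (H(X), d_H) is less than ε. -/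

import Mathlib

open Metric MeasureTheory Filter Set TopologicalSpace
def CodeTree (M N : ℕ) := List (Fin M) → Fin N

lemma codetree_exists_disagree {M N : ℕ} {ω κ : CodeTree M N} (h : ω ≠ κ) :
    ∃ n : ℕ, ∃ i : List (Fin M), i.length = n ∧ ω i ≠ κ i := by
  obtain ⟨i, hi⟩ := Function.ne_iff.mp h
  exact ⟨i.length, i, rfl, hi⟩

open scoped Classical in
noncomputable def treeDist {M N : ℕ} (ω κ : CodeTree M N) : ℝ :=
  if h : ω = κ then 0
  else (1 / (M : ℝ)) ^ Nat.find (codetree_exists_disagree h)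

section
open scoped Classical

variable {M N : ℕ}

lemma treeDist_nonneg (a b : CodeTree M N) : 0 ≤ treeDist a b := by
  unfold treeDist
  by_cases h : a = b
  · simp [h]
  · rw [dif_neg h]; positivity

lemma treeDist_comm (ω κ : CodeTree M N) : treeDist ω κ = treeDist κ ω := by
  unfold treeDist
  by_cases h : ω = κ
  · subst h; simp
  · rw [dif_neg h, dif_neg (Ne.symm h)]
    congr 1
    exact le_antisymm
      (Nat.find_mono fun n => fun ⟨i, hl, hne⟩ => ⟨i, hl, hne.symm⟩)
      (Nat.find_mono fun n => fun ⟨i, hl, hne⟩ => ⟨i, hl, hne.symm⟩)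

lemma treeDist_triangle [NeZero M] (x y z : CodeTree M N) :
    treeDist x y ≤ treeDist x z + treeDist z y := by
  have hMpos : (0 : ℕ) < M := Nat.pos_of_ne_zero (NeZero.ne M)
  have hM : (0 : ℝ) < 1 / (M : ℝ) := by positivity
  have hM1 : (1 / (M : ℝ)) ≤ 1 := by
    rw [div_le_one (by exact_mod_cast hMpos)]
    exact_mod_cast hMpos
  by_cases hxy : x = y
  · rw [show treeDist x y = 0 by rw [hxy]; simp [treeDist]]
    exact add_nonneg (treeDist_nonneg _ _) (treeDist_nonneg _ _)
  by_cases hxz : x = z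
  · subst hxz
    rw [show treeDist x x = 0 by simp [treeDist], zero_add]
  by_cases hzy : z = y
  · subst hzy
    rw [show treeDist z z = 0 by simp [treeDist], add_zero]
  -- all distinct
  have key : Nat.find (codetree_exists_disagree hxz) ≤ Nat.find (codetree_exists_disagree hxy)
      ∨ Nat.find (codetree_exists_disagree hzy) ≤ Nat.find (codetree_exists_disagree hxy) := by
    obtain ⟨i, hlen, hne⟩ := Nat.find_spec (codetree_exists_disagree hxy)
    by_cases h : x i = z i
    · right
      exact Nat.find_le ⟨i, hlen, by rw [← h]; exact hne⟩
    · left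
      exact Nat.find_le ⟨i, hlen, h⟩
  rw [treeDist, dif_neg hxy, treeDist, dif_neg hxz, treeDist, dif_neg hzy]
  rcases key with h | h
  · calc (1 / (M:ℝ)) ^ Nat.find (codetree_exists_disagree hxy)
        ≤ (1 / (M:ℝ)) ^ Nat.find (codetree_exists_disagree hxz) :=
          pow_le_pow_of_le_one (le_of_lt hM) hM1 h
      _ ≤ _ := le_add_of_nonneg_right (by positivity)
  · calc (1 / (M:ℝ)) ^ Nat.find (codetree_exists_disagree hxy)
        ≤ (1 / (M:ℝ)) ^ Nat.find (codetree_exists_disagree hzy) :=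
          pow_le_pow_of_le_one (le_of_lt hM) hM1 h
      _ ≤ _ := le_add_of_nonneg_left (by positivity)

lemma treeDist_eq_zero [NeZero M] {x y : CodeTree M N} (h : treeDist x y = 0) : x = y := by
  by_contra hne
  have hMpos : (0 : ℕ) < M := Nat.pos_of_ne_zero (NeZero.ne M)
  have hM : (0 : ℝ) < 1 / (M : ℝ) := by positivity
  rw [treeDist, dif_neg hne] at h
  exact (pow_pos hM _).ne' h

end

noncomputable instance {M N : ℕ} [NeZero M] : MetricSpace (CodeTree M N) where
  dist := treeDist
  dist_self := fun ω => by simp [treeDist]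
  dist_comm := treeDist_comm
  dist_triangle := fun a b c => treeDist_triangle a c b
  eq_of_dist_eq_zero := treeDist_eq_zero

/-- The index set `A = ({1,…,N} × {1,…,V}^M)^V`; `(a v).1` is the IFS number `n_v`
and `(a v).2 m` is the limb label `v_{v,m}`. -/
abbrev IdxA (M N V : ℕ) := Fin V → Fin N × (Fin M → Fin V)

/-- The shift `ξ_n : Ω^M → Ω`: bottom node labelled `n`, attached to the `M` given trees. -/
def xi {M N : ℕ} (n : Fin N) (ω : Fin M → CodeTree M N) : CodeTree M N :=
  fun i => match i with
  | [] => n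
  | m :: j => ω m j

/-- The map `η^a : Ω^V → Ω^V`. -/
def eta {M N V : ℕ} (a : IdxA M N V) (ω : Fin V → CodeTree M N) : Fin V → CodeTree M N :=
  fun v => xi (a v).1 fun m => ω ((a v).2 m)

/-- The composition `f^{σ(∅)}_{i₁} ∘ f^{σ(i₁)}_{i₂} ∘ ⋯ ∘ f^{σ(i₁…i_{k-1})}_{i_k}`
along the branch `i = i₁i₂…i_k` of the construction tree of `σ`. -/
def treeComp {X : Type*} {M N : ℕ} (f : Fin N → Fin M → X → X) :
    List (Fin M) → CodeTree M N → X → X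
  | [], _ => id
  | m :: t, σ => f (σ []) m ∘ treeComp f t (fun j => σ (m :: j))

/-- The product `p^{σ(∅)}_{i₁} ⋯ p^{σ(i₁…i_{k-1})}_{i_k}` of the probabilities
along the branch `i` of the construction tree of `σ`. -/
def treeProb {M N : ℕ} (p : Fin N → Fin M → NNReal) :
    List (Fin M) → CodeTree M N → NNReal
  | [], _ => 1
  | m :: t, σ => p (σ []) m * treeProb p t (fun j => σ (m :: j))

/-- The map `f^a : H(X)^V → H(X)^V` of the superIFS. -/
def applyIFS {X : Type*} [MetricSpace X] {M N V : ℕ} [NeZero M]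
    (f : Fin N → Fin M → X → X) (hf : ∀ n m, Continuous (f n m))
    (a : IdxA M N V) (K : Fin V → NonemptyCompacts X) : Fin V → NonemptyCompacts X :=
  fun v =>
    ⟨⟨⋃ m, f (a v).1 m '' (K ((a v).2 m) : Set X),
      isCompact_iUnion fun m => ((K ((a v).2 m)).isCompact).image (hf _ _)⟩,
      by
        obtain ⟨x, hx⟩ := (K ((a v).2 0)).nonempty
        exact ⟨f (a v).1 0 x, Set.mem_iUnion.mpr ⟨0, Set.mem_image_of_mem _ hx⟩⟩⟩

section SuperfractalHelpers

open Metric Set Filter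

variable {X : Type*} [MetricSpace X] {M N : ℕ} [NeZero M]

lemma treeComp_cons (f : Fin N → Fin M → X → X) (m : Fin M) (t : List (Fin M))
    (σ : CodeTree M N) :
    treeComp f (m :: t) σ = f (σ []) m ∘ treeComp f t (fun s => σ (m :: s)) := rfl

lemma treeComp_lipschitz {l : NNReal} (f : Fin N → Fin M → X → X)
    (hf : ∀ n m, LipschitzWith l (f n m)) :
    ∀ (i : List (Fin M)) (σ : CodeTree M N),
      LipschitzWith (l ^ i.length) (treeComp f i σ)
  | [], σ => by simpa [treeComp] using LipschitzWith.id
  | m :: t, σ => by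
      have h := (hf (σ []) m).comp (treeComp_lipschitz f hf t fun j => σ (m :: j))
      simpa [treeComp_cons, List.length_cons, pow_succ, mul_comm] using h

lemma treeComp_append (f : Fin N → Fin M → X → X) :
    ∀ (i t : List (Fin M)) (σ : CodeTree M N),
      treeComp f (i ++ t) σ = treeComp f i σ ∘ treeComp f t (fun s => σ (i ++ s))
  | [], t, σ => rfl
  | m :: i', t, σ => by
      have h := treeComp_append f i' t (fun j => σ (m :: j))
      calc treeComp f ((m :: i') ++ t) σ
          = f (σ []) m ∘ treeComp f (i' ++ t) (fun j => σ (m :: j)) := rfl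
        _ = f (σ []) m ∘ (treeComp f i' (fun j => σ (m :: j)) ∘
              treeComp f t (fun s => σ (m :: (i' ++ s)))) := by rw [h]
        _ = treeComp f (m :: i') σ ∘ treeComp f t (fun s => σ ((m :: i') ++ s)) := rfl

def encL {M : ℕ} : List (Fin M) → ℕ
  | [] => 0
  | m :: t => m.val + M * encL t

lemma encL_lt {M : ℕ} [NeZero M] : ∀ i : List (Fin M), encL i < M ^ i.length
  | [] => by simp [encL]
  | m :: t => by
      have h1 : encL t + 1 ≤ M ^ t.length := encL_lt t
      have h2 : m.val + M * encL t < M * (encL t + 1) := by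
        have := m.isLt
        calc m.val + M * encL t < M + M * encL t := by omega
          _ = M * (encL t + 1) := by ring
      calc encL (m :: t) = m.val + M * encL t := rfl
        _ < M * (encL t + 1) := h2
        _ ≤ M * M ^ t.length := Nat.mul_le_mul_left M h1
        _ = M ^ (m :: t).length := by rw [List.length_cons, pow_succ, mul_comm]

def decL (M : ℕ) [NeZero M] : ℕ → ℕ → List (Fin M)
  | 0, _ => []
  | j + 1, x => ⟨x % M, Nat.mod_lt _ (Nat.pos_of_ne_zero (NeZero.ne M))⟩ :: decL M j (x / M)

lemma decL_encL {M : ℕ} [NeZero M] : ∀ i : List (Fin M), decL M i.length (encL i) = i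
  | [] => rfl
  | m :: t => by
      have hM : 0 < M := Nat.pos_of_ne_zero (NeZero.ne M)
      have h1 : (m.val + M * encL t) % M = m.val := by
        rw [Nat.add_mul_mod_self_left, Nat.mod_eq_of_lt m.isLt]
      have h2 : (m.val + M * encL t) / M = encL t := by
        rw [Nat.add_mul_div_left _ _ hM, Nat.div_eq_of_lt m.isLt, zero_add]
      simp only [List.length_cons, encL, decL, h1, h2, decL_encL t, Fin.eta]

lemma iUnion_len_zero (g : List (Fin M) → Set X) :
    (⋃ i, ⋃ (_ : List.length i = 0), g i) = g [] := by
  ext x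
  simp only [mem_iUnion]
  constructor
  · rintro ⟨i, hi, hx⟩
    rw [List.length_eq_zero_iff] at hi
    subst hi; exact hx
  · intro hx; exact ⟨[], rfl, hx⟩

lemma iUnion_len_succ (g : List (Fin M) → Set X) (k : ℕ) :
    (⋃ i, ⋃ (_ : List.length i = k + 1), g i)
      = ⋃ m : Fin M, ⋃ t, ⋃ (_ : List.length t = k), g (m :: t) := by
  ext x
  simp only [mem_iUnion]
  constructor
  · rintro ⟨i, hi, hx⟩
    rcases i with _ | ⟨m, t⟩
    · simp at hi
    · exact ⟨m, t, by simpa using hi, hx⟩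
  · rintro ⟨m, t, ht, hx⟩
    exact ⟨m :: t, by simp [ht], hx⟩

lemma iUnion_len_add (g : List (Fin M) → Set X) (k j : ℕ) :
    (⋃ i, ⋃ (_ : List.length i = k + j), g i)
      = ⋃ i, ⋃ (_ : List.length i = k), ⋃ t, ⋃ (_ : List.length t = j), g (i ++ t) := by
  ext x
  simp only [mem_iUnion]
  constructor
  · rintro ⟨i, hi, hx⟩
    refine ⟨i.take k, ?_, i.drop k, ?_, ?_⟩
    · simp only [List.length_take, hi]; omega
    · simp only [List.length_drop, hi]; omega
    · rwa [List.take_append_drop]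
  · rintro ⟨i, hi, t, ht, hx⟩
    exact ⟨i ++ t, by simp [hi, ht], hx⟩

lemma hd_unions_le {l : NNReal} [CompactSpace X] (f : Fin N → Fin M → X → X)
    (hf : ∀ n m, LipschitzWith l (f n m))
    (σ : CodeTree M N) (k : ℕ) (A B : List (Fin M) → Set X)
    (hA : ∀ i, i.length = k → (A i).Nonempty)
    (hB : ∀ i, i.length = k → (B i).Nonempty) :
    hausdorffDist (⋃ i, ⋃ (_ : List.length i = k), treeComp f i σ '' A i)
        (⋃ i, ⋃ (_ : List.length i = k), treeComp f i σ '' B i)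
      ≤ (l : ℝ) ^ k * diam (univ : Set X) := by
  have hD : (0:ℝ) ≤ (l:ℝ) ^ k * diam (univ : Set X) := by
    have := diam_nonneg (s := (univ : Set X))
    positivity
  have key : ∀ A B : List (Fin M) → Set X, (∀ i, i.length = k → (B i).Nonempty) →
      ∀ x ∈ (⋃ i, ⋃ (_ : List.length i = k), treeComp f i σ '' A i),
      ∃ y ∈ (⋃ i, ⋃ (_ : List.length i = k), treeComp f i σ '' B i),
        dist x y ≤ (l : ℝ) ^ k * diam (univ : Set X) := by
    intro A B hB x hx
    simp only [mem_iUnion, mem_image] at hx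
    obtain ⟨i, hi, a, ha, rfl⟩ := hx
    obtain ⟨b, hb⟩ := hB i hi
    refine ⟨treeComp f i σ b, ?_, ?_⟩
    · simp only [mem_iUnion]
      exact ⟨i, hi, mem_image_of_mem _ hb⟩
    · calc dist (treeComp f i σ a) (treeComp f i σ b)
          ≤ (l ^ i.length : NNReal) * dist a b :=
            (treeComp_lipschitz f hf i σ).dist_le_mul a b
        _ ≤ (l : ℝ) ^ k * diam (univ : Set X) := by
            rw [hi, NNReal.coe_pow]
            have hd : dist a b ≤ diam (univ : Set X) :=
              dist_le_diam_of_mem isCompact_univ.isBounded (mem_univ a) (mem_univ b)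
            have hp : (0:ℝ) ≤ (l:ℝ) ^ k := by positivity
            exact mul_le_mul_of_nonneg_left hd hp
  refine hausdorffDist_le_of_mem_dist hD (key A B hB) ?_
  intro y hy
  obtain ⟨x, hx, hd⟩ := key B A hA y hy
  exact ⟨x, hx, hd⟩

lemma hd_level_Fc {l : NNReal} [CompactSpace X] [Nonempty X]
    (f : Fin N → Fin M → X → X) (hf : ∀ n m, LipschitzWith l (f n m))
    (Fc : CodeTree M N → NonemptyCompacts X)
    (hFc : ∀ (σ : CodeTree M N) (K : Set X), K.Nonempty → IsCompact K →
      Tendsto (fun k => hausdorffDist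
          (⋃ (i : List (Fin M)) (_ : i.length = k), treeComp f i σ '' K) (Fc σ : Set X))
        atTop (nhds 0))
    (σ : CodeTree M N) (k : ℕ) :
    hausdorffDist (⋃ i, ⋃ (_ : List.length i = k), treeComp f i σ '' (univ : Set X))
        (Fc σ : Set X)
      ≤ (l : ℝ) ^ k * diam (univ : Set X) := by
  obtain ⟨x₀⟩ := ‹Nonempty X›
  have hD := diam_nonneg (s := (univ : Set X))
  set D := diam (univ : Set X) with hDdef
  let Ak : ℕ → Set X :=
    fun k' => ⋃ i, ⋃ (_ : List.length i = k'), treeComp f i σ '' (univ : Set X)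
  show hausdorffDist (Ak k) (Fc σ : Set X) ≤ (l : ℝ) ^ k * D
  have hAkne : ∀ k', (Ak k').Nonempty := by
    intro k'
    refine ⟨treeComp f (List.replicate k' (0 : Fin M)) σ x₀, ?_⟩
    simp only [Ak, mem_iUnion]
    exact ⟨List.replicate k' 0, by simp, mem_image_of_mem _ (mem_univ x₀)⟩
  have hbd : ∀ s : Set X, Bornology.IsBounded s :=
    fun s => isCompact_univ.isBounded.subset (subset_univ s)
  have hfin : ∀ k₁ k₂, EMetric.hausdorffEdist (Ak k₁) (Ak k₂) ≠ ⊤ :=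
    fun k₁ k₂ => hausdorffEdist_ne_top_of_nonempty_of_bounded (hAkne k₁) (hAkne k₂)
      (hbd _) (hbd _)
  have h1 : ∀ j : ℕ, hausdorffDist (Ak k) (Ak (k + j)) ≤ (l : ℝ) ^ k * D := by
    intro j
    have hsplit : Ak (k + j)
        = ⋃ i, ⋃ (_ : List.length i = k), treeComp f i σ ''
            (⋃ t, ⋃ (_ : List.length t = j), treeComp f t (fun s => σ (i ++ s)) ''
              (univ : Set X)) := by
      show (⋃ i, ⋃ (_ : List.length i = k + j), treeComp f i σ '' (univ : Set X)) = _
      rw [iUnion_len_add]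
      refine iUnion_congr fun i => iUnion_congr fun hi => ?_
      rw [image_iUnion]
      refine iUnion_congr fun t => ?_
      rw [image_iUnion]
      refine iUnion_congr fun ht => ?_
      rw [treeComp_append, Set.image_comp]
    rw [hsplit]
    refine hd_unions_le f hf σ k _ _ (fun i _ => ⟨x₀, mem_univ x₀⟩) ?_
    intro i _
    refine ⟨treeComp f (List.replicate j (0 : Fin M)) (fun s => σ (i ++ s)) x₀, ?_⟩
    simp only [mem_iUnion]
    exact ⟨List.replicate j 0, by simp, mem_image_of_mem _ (mem_univ x₀)⟩
  have h2 : Tendsto (fun j : ℕ => hausdorffDist (Ak (j + k)) (Fc σ : Set X))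
      atTop (nhds 0) :=
    (hFc σ univ univ_nonempty isCompact_univ).comp (tendsto_add_atTop_nat k)
  have key : ∀ j : ℕ, hausdorffDist (Ak k) (Fc σ : Set X)
      ≤ (l : ℝ) ^ k * D + hausdorffDist (Ak (j + k)) (Fc σ : Set X) := by
    intro j
    have htri := hausdorffDist_triangle (u := (Fc σ : Set X)) (hfin k (j + k))
    have := h1 j
    rw [show k + j = j + k from Nat.add_comm k j] at this
    linarith
  have h3 : Tendsto (fun j : ℕ => (l : ℝ) ^ k * D + hausdorffDist (Ak (j + k)) (Fc σ : Set X))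
      atTop (nhds ((l : ℝ) ^ k * D + 0)) := tendsto_const_nhds.add h2
  rw [add_zero] at h3
  exact ge_of_tendsto' h3 key

lemma hd_est {l : NNReal} [CompactSpace X] [Nonempty X]
    (f : Fin N → Fin M → X → X) (hf : ∀ n m, LipschitzWith l (f n m))
    (Fc : CodeTree M N → NonemptyCompacts X)
    (hFc : ∀ (σ : CodeTree M N) (K : Set X), K.Nonempty → IsCompact K →
      Tendsto (fun k => hausdorffDist
          (⋃ (i : List (Fin M)) (_ : i.length = k), treeComp f i σ '' K) (Fc σ : Set X))
        atTop (nhds 0))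
    (σ : CodeTree M N) (k : ℕ) (A : List (Fin M) → Set X)
    (hA : ∀ i, i.length = k → (A i).Nonempty) :
    hausdorffDist (⋃ i, ⋃ (_ : List.length i = k), treeComp f i σ '' A i) (Fc σ : Set X)
      ≤ 2 * ((l : ℝ) ^ k * diam (univ : Set X)) := by
  obtain ⟨x₀⟩ := ‹Nonempty X›
  have hbd : ∀ s : Set X, Bornology.IsBounded s :=
    fun s => isCompact_univ.isBounded.subset (subset_univ s)
  have hSne : (⋃ i, ⋃ (_ : List.length i = k), treeComp f i σ '' A i).Nonempty := by
    obtain ⟨a, ha⟩ := hA (List.replicate k (0 : Fin M)) (by simp)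
    refine ⟨treeComp f (List.replicate k (0 : Fin M)) σ a, ?_⟩
    simp only [mem_iUnion]
    exact ⟨List.replicate k 0, by simp, mem_image_of_mem _ ha⟩
  have hUne : (⋃ i, ⋃ (_ : List.length i = k), treeComp f i σ '' (univ : Set X)).Nonempty := by
    refine ⟨treeComp f (List.replicate k (0 : Fin M)) σ x₀, ?_⟩
    simp only [mem_iUnion]
    exact ⟨List.replicate k 0, by simp, mem_image_of_mem _ (mem_univ x₀)⟩
  have hfin : EMetric.hausdorffEdist
      (⋃ i, ⋃ (_ : List.length i = k), treeComp f i σ '' A i)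
      (⋃ i, ⋃ (_ : List.length i = k), treeComp f i σ '' (univ : Set X)) ≠ ⊤ :=
    hausdorffEdist_ne_top_of_nonempty_of_bounded hSne hUne (hbd _) (hbd _)
  have htri := hausdorffDist_triangle (u := (Fc σ : Set X)) hfin
  have hu := hd_unions_le f hf σ k A (fun _ => univ) hA (fun _ _ => ⟨x₀, mem_univ x₀⟩)
  have hlev := hd_level_Fc f hf Fc hFc σ k
  linarith

end SuperfractalHelpers


/-- **Superfractals converge to the set of random fractals.** Let `H = F(Ω)` be the set
of random fractal sets of the superIFS, where `F : Ω → H(X)` is the coding map, and for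
each `V ≥ 1` let `H_{V,1}` be the superfractal, the set of first components of the set
attractor `H_V` of the IFS `{H(X)^V; f^a, a ∈ A}`.  Then `H_{V,1} → H` as `V → ∞` in the
Hausdorff metric on `H(H(X))`: for every `ε > 0` there is `V₀` such that for all
`V ≥ V₀` the Hausdorff distance between `H_{V,1}` and `H` in `(H(X), d_H)` is less
than `ε`. -/
theorem stmt_19 {X : Type*} [MetricSpace X] [CompactSpace X] [Nonempty X]
    {M N : ℕ} [NeZero M] (hN : 0 < N)
    (f : Fin N → Fin M → X → X) (l : NNReal) (hl : l < 1)
    (hf : ∀ n m, LipschitzWith l (f n m))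
    (p : Fin N → Fin M → NNReal) (hp : ∀ n, ∑ m, p n m = 1)
    (Fc : CodeTree M N → NonemptyCompacts X)
    (hFc : ∀ (σ : CodeTree M N) (K : Set X), K.Nonempty → IsCompact K →
      Tendsto (fun k => hausdorffDist
          (⋃ (i : List (Fin M)) (_ : i.length = k), treeComp f i σ '' K) (Fc σ : Set X))
        atTop (nhds 0))
    (HV : ∀ V : ℕ, Set (Fin V → NonemptyCompacts X))
    (hHV : ∀ V : ℕ, 0 < V →
      (HV V).Nonempty ∧ IsCompact (HV V) ∧
      HV V = (⋃ a : IdxA M N V, applyIFS f (fun n m => (hf n m).continuous) a '' HV V) ∧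
      (∀ S : Set (Fin V → NonemptyCompacts X), S.Nonempty → IsCompact S →
        S = ⋃ a : IdxA M N V, applyIFS f (fun n m => (hf n m).continuous) a '' S →
        S = HV V)) :
    ∀ ε : ℝ, 0 < ε → ∃ V₀ : ℕ, 0 < V₀ ∧ ∀ V : ℕ, V₀ ≤ V →
      hausdorffDist
        {K : NonemptyCompacts X | ∃ ω ∈ HV V, ∃ v : Fin V, (v : ℕ) = 0 ∧ ω v = K}
        (Set.range Fc) < ε := by
  intro ε hε
  have hM : 0 < M := Nat.pos_of_ne_zero (NeZero.ne M)
  have hDnn : (0:ℝ) ≤ diam (univ : Set X) := diam_nonneg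
  have hl' : (l : ℝ) < 1 := by exact_mod_cast hl
  obtain ⟨k, hk⟩ := exists_pow_lt_of_lt_one
    (div_pos hε (by linarith : (0:ℝ) < 2 * diam (univ : Set X) + 1)) hl'
  have hrε : 2 * ((l : ℝ) ^ k * diam (univ : Set X)) < ε := by
    have hp : (0:ℝ) ≤ (l:ℝ) ^ k := by positivity
    have h2 : (l:ℝ) ^ k * (2 * diam (univ : Set X) + 1) < ε :=
      (lt_div_iff₀ (by linarith)).mp hk
    nlinarith
  refine ⟨M ^ k, pow_pos hM k, fun V hV => ?_⟩
  have hVpos : 0 < V := lt_of_lt_of_le (pow_pos hM k) hV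
  obtain ⟨hne, -, heq, -⟩ := hHV V hVpos
  -- Claim A: every component of every element of `HV V` is a level-`kk` union
  -- of images of nonempty compact sets along some code tree.
  have claimA : ∀ (kk : ℕ), ∀ ω ∈ HV V, ∀ v : Fin V,
      ∃ σ : CodeTree M N, ∃ K : List (Fin M) → NonemptyCompacts X,
        (ω v : Set X) = ⋃ i, ⋃ (_ : List.length i = kk), treeComp f i σ '' (K i : Set X) := by
    intro kk
    induction kk with
    | zero =>
      intro ω hω v
      refine ⟨fun _ => ⟨0, hN⟩, fun _ => ω v, ?_⟩
      rw [iUnion_len_zero]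
      exact (Set.image_id _).symm
    | succ kk ih =>
      intro ω hω v
      rw [heq] at hω
      simp only [mem_iUnion, mem_image] at hω
      obtain ⟨a, κ, hκ, rfl⟩ := hω
      choose σs Ks hKs using fun m : Fin M => ih κ hκ ((a v).2 m)
      refine ⟨xi (a v).1 σs,
        fun i => match i with | [] => Ks 0 [] | (m :: t) => Ks m t, ?_⟩
      have hKc : ∀ (m : Fin M) (t : List (Fin M)),
          ((fun i => match i with | [] => Ks 0 [] | (m :: t) => Ks m t)
            (m :: t) : NonemptyCompacts X) = Ks m t := fun _ _ => rfl
      have hcomp : ((applyIFS f (fun n m => (hf n m).continuous) a κ) v : Set X)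
          = ⋃ m, f (a v).1 m '' (κ ((a v).2 m) : Set X) := rfl
      rw [hcomp, iUnion_len_succ]
      refine iUnion_congr fun m => ?_
      rw [hKs m, image_iUnion]
      refine iUnion_congr fun t => ?_
      rw [image_iUnion]
      refine iUnion_congr fun ht => ?_
      rw [hKc, treeComp_cons, Set.image_comp]
      simp only [xi]
  -- Claim B: every level-`k` truncation of a code tree is realized as the
  -- distinguished component of some element of `HV V`.
  have claimB : ∀ σ : CodeTree M N, ∃ ω ∈ HV V, ∃ K : List (Fin M) → NonemptyCompacts X,
      (ω (⟨0, hVpos⟩ : Fin V) : Set X)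
        = ⋃ i, ⋃ (_ : List.length i = k), treeComp f i σ '' (K i : Set X) := by
    intro σ
    have hencV : ∀ i : List (Fin M), i.length < k → encL i < V := by
      intro i hi
      calc encL i < M ^ i.length := encL_lt i
        _ ≤ M ^ k := Nat.pow_le_pow_right hM hi.le
        _ ≤ V := hV
    have key : ∀ r : ℕ, r ≤ k → ∃ ω ∈ HV V, ∃ K : List (Fin M) → NonemptyCompacts X,
        ∀ i : List (Fin M), i.length + r = k →
          (ω (⟨encL i % V, Nat.mod_lt _ hVpos⟩ : Fin V) : Set X)
            = ⋃ t, ⋃ (_ : List.length t = r),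
                treeComp f t (fun s => σ (i ++ s)) '' (K (i ++ t) : Set X) := by
      intro r
      induction r with
      | zero =>
        intro _
        obtain ⟨ω, hω⟩ := hne
        refine ⟨ω, hω, fun a => ω ⟨encL a % V, Nat.mod_lt _ hVpos⟩, fun i hi => ?_⟩
        rw [iUnion_len_zero, List.append_nil]
        exact (Set.image_id _).symm
      | succ r ih =>
        intro hrk
        obtain ⟨ω', hω', K, hK⟩ := ih (Nat.le_of_succ_le hrk)
        refine ⟨applyIFS f (fun n m => (hf n m).continuous)
            (fun v => (σ (decL M (k - (r+1)) v.val),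
              fun m => (⟨encL (decL M (k - (r+1)) v.val ++ [m]) % V,
                Nat.mod_lt _ hVpos⟩ : Fin V)))
            ω', ?_, K, ?_⟩
        · rw [heq]
          exact mem_iUnion.mpr ⟨_, mem_image_of_mem _ hω'⟩
        · intro i hi
          have hij : i.length = k - (r+1) := by omega
          have hiltk : i.length < k := by omega
          have hvval : encL i % V = encL i := Nat.mod_eq_of_lt (hencV i hiltk)
          have hdec : decL M (k - (r+1)) (encL i % V) = i := by
            rw [hvval, ← hij, decL_encL]
          have hcomp : ((applyIFS f (fun n m => (hf n m).continuous)
                (fun v => (σ (decL M (k - (r+1)) v.val),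
                  fun m => (⟨encL (decL M (k - (r+1)) v.val ++ [m]) % V,
                    Nat.mod_lt _ hVpos⟩ : Fin V))) ω')
                (⟨encL i % V, Nat.mod_lt _ hVpos⟩ : Fin V) : Set X)
              = ⋃ m, f (σ i) m ''
                  (ω' (⟨encL (i ++ [m]) % V, Nat.mod_lt _ hVpos⟩ : Fin V) : Set X) := by
            show (⋃ m, f (σ (decL M (k - (r+1)) (encL i % V))) m ''
                (ω' (⟨encL (decL M (k - (r+1)) (encL i % V) ++ [m]) % V,
                  Nat.mod_lt _ hVpos⟩ : Fin V) : Set X)) = _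
            rw [hdec]
          rw [hcomp, iUnion_len_succ]
          refine iUnion_congr fun m => ?_
          rw [hK (i ++ [m])
            (by simp only [List.length_append, List.length_cons, List.length_nil]; omega),
            image_iUnion]
          refine iUnion_congr fun t => ?_
          rw [image_iUnion]
          refine iUnion_congr fun ht => ?_
          rw [show (treeComp f (m :: t) fun s => σ (i ++ s))
              = f (σ (i ++ [])) m ∘ treeComp f t (fun s => σ (i ++ (m :: s))) from rfl,
            Set.image_comp]
          simp only [← List.append_cons, List.append_nil]
    obtain ⟨ω, hω, K, hK⟩ := key k le_rfl
    refine ⟨ω, hω, K, ?_⟩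
    have h0 := hK [] (by simp)
    have hfix : (⟨encL ([] : List (Fin M)) % V, Nat.mod_lt _ hVpos⟩ : Fin V)
        = ⟨0, hVpos⟩ := Fin.ext (by simp [encL])
    rw [hfix] at h0
    exact h0
  -- Put the two claims together.
  have hr0 : (0:ℝ) ≤ 2 * ((l : ℝ) ^ k * diam (univ : Set X)) := by positivity
  refine lt_of_le_of_lt (hausdorffDist_le_of_mem_dist hr0 ?_ ?_) hrε
  · rintro Kc ⟨ω, hω, v, hv0, rfl⟩
    obtain ⟨σ, K, hKeq⟩ := claimA k ω hω v
    refine ⟨Fc σ, mem_range_self σ, ?_⟩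
    rw [NonemptyCompacts.dist_eq, hKeq]
    exact hd_est f hf Fc hFc σ k _ (fun i _ => (K i).nonempty)
  · rintro y ⟨σ, rfl⟩
    obtain ⟨ω, hω, K, hKeq⟩ := claimB σ
    refine ⟨ω ⟨0, hVpos⟩, ⟨ω, hω, ⟨0, hVpos⟩, rfl, rfl⟩, ?_⟩
    rw [NonemptyCompacts.dist_eq, hausdorffDist_comm, hKeq]
    exact hd_est f hf Fc hFc σ k _ (fun i _ => (K i).nonempty)
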